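/- Generalized bilinear formula: as formal power series in x, y, z, sum_{l,m,n>=0} C_{l+m}(a,r) * C_{l+n}(b,s) * x^l y^m z^n / (l! m! n!) = e^(r*s*x + r*y + s*z) * sum_{l>=0} (a)_l (b)_l x^l / (l! * (1-s*x-y)^(l+a) * (1-r*x-z)^(l+b)). -/

import Mathlib

open Finset

noncomputable def rf {R : Type*} [CommRing R] (a : R) (k : ℕ) : R :=
  (ascPochhammer R k).eval a

noncomputable def Ch {R : Type*} [CommRing R] (a r : R) (n : ℕ) : R :=
  ∑ k ∈ Finset.range (n + 1), (n.choose k : R) * rf a k * r ^ (n - k)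

lemma rf_add {R : Type*} [CommRing R] (a : R) (n m : ℕ) :
    rf a n * rf (a + n) m = rf a (n + m) := by
  have h := congrArg (Polynomial.eval a) (ascPochhammer_mul R n m)
  simpa [rf, Polynomial.eval_comp] using h

lemma sum_ite_eqP {β : Type*} [AddCommMonoid β] (n t : ℕ) (P : ℕ → Prop) [DecidablePred P]
    (f : ℕ → β) :
    (∑ i ∈ range n, if i = t ∧ P i then f i else 0) = if t < n ∧ P t then f t else 0 := by
  by_cases hP : P t
  · rw [Finset.sum_congr rfl (g := fun i => if i = t then f i else 0)
      (fun i _ => by by_cases h : i = t <;> simp [h, hP]),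
      Finset.sum_ite_eq' (range n) t f]
    simp [Finset.mem_range, hP]
  · rw [Finset.sum_eq_zero, if_neg (by tauto)]
    intro i _; rw [if_neg]; rintro ⟨rfl, h⟩; exact hP h

lemma lemS (L u v : ℕ) :
    (∑ l ∈ range (L+1), if l ≤ u ∧ l ≤ v ∧ u + v ≤ L + l then
      ((l.factorial * (L+l-u-v).factorial * (u-l).factorial * (v-l).factorial : ℕ) : ℚ)⁻¹ else 0)
    = (L.choose u * L.choose v : ℚ) / L.factorial := by
  by_cases hu : u ≤ L
  · by_cases hv : v ≤ L
    · have hvan : ((L.choose v : ℕ) : ℚ) = ∑ l ∈ range (v+1), ((u.choose l * (L-u).choose (v-l) : ℕ) : ℚ) := by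
        have h := Nat.add_choose_eq u (L-u) v
        rw [Nat.sum_antidiagonal_eq_sum_range_succ_mk, show u + (L-u) = L from by omega] at h
        exact_mod_cast congrArg (Nat.cast : ℕ → ℚ) h
      have step1 : ∀ l ∈ range (L+1),
          (if l ≤ u ∧ l ≤ v ∧ u + v ≤ L + l then
            ((l.factorial * (L+l-u-v).factorial * (u-l).factorial * (v-l).factorial : ℕ) : ℚ)⁻¹ else 0)
          = (if l ≤ u ∧ l ≤ v ∧ u + v ≤ L + l then ((u.choose l * (L-u).choose (v-l) : ℕ) : ℚ) else 0)
              / ((u.factorial * (L-u).factorial : ℕ) : ℚ) := by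
        intro l _
        by_cases hc : l ≤ u ∧ l ≤ v ∧ u + v ≤ L + l
        · rw [if_pos hc, if_pos hc]
          obtain ⟨hc1, hc2, hc3⟩ := hc
          have key : u.choose l * (L-u).choose (v-l) *
              (l.factorial * (L+l-u-v).factorial * (u-l).factorial * (v-l).factorial)
              = u.factorial * (L-u).factorial := by
            have h1 := Nat.choose_mul_factorial_mul_factorial hc1
            have h2 := Nat.choose_mul_factorial_mul_factorial (show v-l ≤ L-u by omega)
            rw [show L-u-(v-l) = L+l-u-v by omega] at h2
            rw [← h1, ← h2]; ring
          have hX : ((l.factorial * (L+l-u-v).factorial * (u-l).factorial * (v-l).factorial : ℕ) : ℚ) ≠ 0 :=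
            Nat.cast_ne_zero.mpr (by positivity)
          have hY : ((u.factorial * (L-u).factorial : ℕ) : ℚ) ≠ 0 :=
            Nat.cast_ne_zero.mpr (by positivity)
          rw [eq_div_iff hY, inv_mul_eq_iff_eq_mul₀ hX]
          have keyQ := congrArg (Nat.cast : ℕ → ℚ) key
          push_cast at keyQ ⊢
          linear_combination -keyQ
        · rw [if_neg hc, if_neg hc, zero_div]
      rw [Finset.sum_congr rfl step1, ← Finset.sum_div]
      have step3 : (∑ l ∈ range (L+1), if l ≤ u ∧ l ≤ v ∧ u + v ≤ L + l then
          ((u.choose l * (L-u).choose (v-l) : ℕ) : ℚ) else 0)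
          = ∑ l ∈ range (v+1), ((u.choose l * (L-u).choose (v-l) : ℕ) : ℚ) := by
        rw [← Finset.sum_subset (show range (v+1) ⊆ range (L+1) from Finset.range_subset_range.2 (by omega))
          (fun l _ hl => by rw [if_neg]; intro hc; exact hl (Finset.mem_range.2 (by omega)))]
        refine Finset.sum_congr rfl fun l hl => ?_
        have hlv : l ≤ v := Nat.lt_succ_iff.1 (Finset.mem_range.1 hl)
        by_cases hc : l ≤ u ∧ l ≤ v ∧ u + v ≤ L + l
        · rw [if_pos hc]
        · rw [if_neg hc]
          rcases (by omega : u < l ∨ L - u < v - l) with h | h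
          · rw [Nat.choose_eq_zero_of_lt h]; push_cast; ring
          · rw [Nat.choose_eq_zero_of_lt h]; push_cast; ring
      rw [step3, ← hvan]
      have hY : ((u.factorial * (L-u).factorial : ℕ) : ℚ) ≠ 0 :=
        Nat.cast_ne_zero.mpr (by positivity)
      have hZ : ((L.factorial : ℕ) : ℚ) ≠ 0 := by exact_mod_cast L.factorial_ne_zero
      rw [div_eq_div_iff hY hZ]
      have := Nat.choose_mul_factorial_mul_factorial hu
      push_cast [← this]
      ring
    · rw [Finset.sum_eq_zero fun l _ => if_neg (by omega),
        Nat.choose_eq_zero_of_lt (show L < v by omega)]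
      push_cast; ring
  · rw [Finset.sum_eq_zero fun l _ => if_neg (by omega),
      Nat.choose_eq_zero_of_lt (show L < u by omega)]
    push_cast; ring

lemma lemII (L M k : ℕ) :
    (∑ j ∈ range (M+1), if j ≤ k then
        (((M-j).factorial * j.factorial : ℕ) : ℚ)⁻¹ * (L.choose (k-j) : ℚ) else 0)
    = ((L+M).choose k : ℚ) / M.factorial := by
  have hvan : (((L+M).choose k : ℕ) : ℚ)
      = ∑ j ∈ range (k+1), ((M.choose j * L.choose (k-j) : ℕ) : ℚ) := by
    have h := Nat.add_choose_eq M L k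
    rw [Nat.sum_antidiagonal_eq_sum_range_succ_mk, Nat.add_comm M L] at h
    exact_mod_cast congrArg (Nat.cast : ℕ → ℚ) h
  have step1 : ∀ j ∈ range (M+1),
      (if j ≤ k then (((M-j).factorial * j.factorial : ℕ) : ℚ)⁻¹ * (L.choose (k-j) : ℚ) else 0)
      = (if j ≤ k then ((M.choose j * L.choose (k-j) : ℕ) : ℚ) else 0) / (M.factorial : ℚ) := by
    intro j hj
    have hjM : j ≤ M := Nat.lt_succ_iff.1 (Finset.mem_range.1 hj)
    by_cases hc : j ≤ k
    · rw [if_pos hc, if_pos hc]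
      have key : M.choose j * ((M-j).factorial * j.factorial) = M.factorial := by
        have h1 := Nat.choose_mul_factorial_mul_factorial hjM
        rw [← h1]; ring
      have hX : (((M-j).factorial * j.factorial : ℕ) : ℚ) ≠ 0 := Nat.cast_ne_zero.mpr (by positivity)
      have hM : (M.factorial : ℚ) ≠ 0 := by exact_mod_cast M.factorial_ne_zero
      have keyQ := congrArg (Nat.cast : ℕ → ℚ) key
      push_cast at keyQ
      field_simp
      push_cast
      linear_combination -(L.choose (k-j) : ℚ) * keyQ
    · rw [if_neg hc, if_neg hc, zero_div]
  rw [Finset.sum_congr rfl step1, ← Finset.sum_div]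
  congr 1
  rw [hvan]
  rw [Finset.sum_subset (show range (M+1) ⊆ range (M+k+1) from Finset.range_subset_range.2 (by omega))
    (f := fun j => if j ≤ k then ((M.choose j * L.choose (k-j) : ℕ) : ℚ) else 0)
    (fun j _ hj => ?_)]
  · rw [← Finset.sum_subset (show range (k+1) ⊆ range (M+k+1) from Finset.range_subset_range.2 (by omega))
      (fun j _ hj => by rw [if_neg]; intro hc; exact hj (Finset.mem_range.2 (by omega)))]
    exact Finset.sum_congr rfl fun j hj => if_pos (Nat.lt_succ_iff.1 (Finset.mem_range.1 hj))
  · have hjM : M < j := by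
      have := Finset.mem_range.not.1 hj
      omega
    show (if j ≤ k then ((M.choose j * L.choose (k-j) : ℕ) : ℚ) else 0) = 0
    by_cases hc : j ≤ k
    · rw [if_pos hc, Nat.choose_eq_zero_of_lt hjM]; push_cast; ring
    · rw [if_neg hc]

lemma lemT (L k k' j j' : ℕ) :
    (∑ l ∈ range (L+1), ∑ p ∈ range (L-l+1), ∑ i ∈ range (L-l-p+1),
      if l+i+j = k ∧ (L-p-i)+j' = k' then
        ((l.factorial * p.factorial * i.factorial * (L-l-p-i).factorial : ℕ) : ℚ)⁻¹ else 0)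
    = if j ≤ k ∧ j' ≤ k' then (L.choose (k-j) * L.choose (k'-j') : ℚ) / L.factorial else 0 := by
  by_cases hjj : j ≤ k ∧ j' ≤ k'
  · obtain ⟨hjk, hjk'⟩ := hjj
    rw [if_pos ⟨hjk, hjk'⟩, ← lemS L (k-j) (k'-j')]
    refine Finset.sum_congr rfl fun l hl => ?_
    have hlL : l ≤ L := Nat.lt_succ_iff.1 (Finset.mem_range.1 hl)
    have istep : ∀ p ∈ range (L-l+1),
        (∑ i ∈ range (L-l-p+1), if l+i+j = k ∧ (L-p-i)+j' = k' then
          ((l.factorial * p.factorial * i.factorial * (L-l-p-i).factorial : ℕ) : ℚ)⁻¹ else 0)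
        = if (k-j-l < L-l-p+1 ∧ (l+j ≤ k ∧ (L-p-(k-j-l))+j' = k')) then
            ((l.factorial * p.factorial * (k-j-l).factorial * (L-l-p-(k-j-l)).factorial : ℕ) : ℚ)⁻¹ else 0 := by
      intro p hp
      rw [Finset.sum_congr rfl (fun i _ => if_congr (show (l+i+j = k ∧ (L-p-i)+j' = k') ↔
        (i = k-j-l ∧ (l+j ≤ k ∧ (L-p-i)+j' = k')) by omega) rfl rfl),
        sum_ite_eqP (L-l-p+1) (k-j-l) (fun i => l+j ≤ k ∧ (L-p-i)+j' = k')]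
    rw [Finset.sum_congr rfl istep]
    have pstep : ∀ p ∈ range (L-l+1),
        (if (k-j-l < L-l-p+1 ∧ (l+j ≤ k ∧ (L-p-(k-j-l))+j' = k')) then
            ((l.factorial * p.factorial * (k-j-l).factorial * (L-l-p-(k-j-l)).factorial : ℕ) : ℚ)⁻¹ else 0)
        = if (p = L+l+j+j'-k-k' ∧ (k-j-l < L-l-p+1 ∧ (l+j ≤ k ∧ (L-p-(k-j-l))+j' = k'))) then
            ((l.factorial * p.factorial * (k-j-l).factorial * (L-l-p-(k-j-l)).factorial : ℕ) : ℚ)⁻¹ else 0 := by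
      intro p hp
      have hpL : p ≤ L - l := Nat.lt_succ_iff.1 (Finset.mem_range.1 hp)
      exact if_congr (by omega) rfl rfl
    rw [Finset.sum_congr rfl pstep,
      sum_ite_eqP (L-l+1) (L+l+j+j'-k-k')
        (fun p => (k-j-l < L-l-p+1 ∧ (l+j ≤ k ∧ (L-p-(k-j-l))+j' = k')))]
    split_ifs with h1 h2
    · have e1 : L+l+j+j'-k-k' = L+l-(k-j)-(k'-j') := by omega
      have e2 : L-l-(L+l+j+j'-k-k')-(k-j-l) = (k'-j')-l := by omega
      rw [e1] at e2 ⊢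
      rw [e2]
    · exfalso; omega
    · exfalso; omega
    · rfl
  · rw [if_neg hjj]
    refine Finset.sum_eq_zero fun l _ => Finset.sum_eq_zero fun p _ =>
      Finset.sum_eq_zero fun i _ => if_neg ?_
    rintro ⟨h1, h2⟩
    exact hjj ⟨by omega, by omega⟩

lemma lemC (L M N k k' : ℕ) :
    (∑ j ∈ range (M+1), ∑ j' ∈ range (N+1), ∑ l ∈ range (L+1), ∑ p ∈ range (L-l+1),
      ∑ i ∈ range (L-l-p+1),
      if l+i+j = k ∧ (L-p-i)+j' = k' then
        (((M-j).factorial * j.factorial : ℕ) : ℚ)⁻¹ * (((N-j').factorial * j'.factorial : ℕ) : ℚ)⁻¹ *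
        ((l.factorial * p.factorial * i.factorial * (L-l-p-i).factorial : ℕ) : ℚ)⁻¹ else 0)
    = ((L+M).choose k * (L+N).choose k' : ℚ) / (L.factorial * M.factorial * N.factorial) := by
  have main : ∀ j ∈ range (M+1), ∀ j' ∈ range (N+1),
      (∑ l ∈ range (L+1), ∑ p ∈ range (L-l+1), ∑ i ∈ range (L-l-p+1),
        if l+i+j = k ∧ (L-p-i)+j' = k' then
          (((M-j).factorial * j.factorial : ℕ) : ℚ)⁻¹ * (((N-j').factorial * j'.factorial : ℕ) : ℚ)⁻¹ *
          ((l.factorial * p.factorial * i.factorial * (L-l-p-i).factorial : ℕ) : ℚ)⁻¹ else 0)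
      = (if j ≤ k then (((M-j).factorial * j.factorial : ℕ) : ℚ)⁻¹ * (L.choose (k-j) : ℚ) else 0)
        * (if j' ≤ k' then (((N-j').factorial * j'.factorial : ℕ) : ℚ)⁻¹ * (L.choose (k'-j') : ℚ) else 0)
        / (L.factorial : ℚ) := by
    intro j _ j' _
    have h1 : (((M-j).factorial * j.factorial : ℕ) : ℚ)⁻¹ * (((N-j').factorial * j'.factorial : ℕ) : ℚ)⁻¹ *
        (∑ l ∈ range (L+1), ∑ p ∈ range (L-l+1), ∑ i ∈ range (L-l-p+1),
          if l+i+j = k ∧ (L-p-i)+j' = k' then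
            ((l.factorial * p.factorial * i.factorial * (L-l-p-i).factorial : ℕ) : ℚ)⁻¹ else 0)
        = (∑ l ∈ range (L+1), ∑ p ∈ range (L-l+1), ∑ i ∈ range (L-l-p+1),
          if l+i+j = k ∧ (L-p-i)+j' = k' then
            (((M-j).factorial * j.factorial : ℕ) : ℚ)⁻¹ * (((N-j').factorial * j'.factorial : ℕ) : ℚ)⁻¹ *
            ((l.factorial * p.factorial * i.factorial * (L-l-p-i).factorial : ℕ) : ℚ)⁻¹ else 0) := by
      simp only [Finset.mul_sum]
      refine Finset.sum_congr rfl fun l _ => Finset.sum_congr rfl fun p _ =>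
        Finset.sum_congr rfl fun i _ => ?_
      split_ifs <;> ring
    rw [← h1, lemT]
    by_cases hA : j ≤ k <;> by_cases hB : j' ≤ k' <;> simp [hA, hB] <;> ring
  rw [Finset.sum_congr rfl (fun j hj => Finset.sum_congr rfl (fun j' hj' => main j hj j' hj'))]
  simp only [← Finset.sum_div]
  rw [← Finset.sum_mul_sum, lemII, lemII]
  have hM : (M.factorial : ℚ) ≠ 0 := by exact_mod_cast M.factorial_ne_zero
  have hN : (N.factorial : ℚ) ≠ 0 := by exact_mod_cast N.factorial_ne_zero
  have hL : (L.factorial : ℚ) ≠ 0 := by exact_mod_cast L.factorial_ne_zero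
  field_simp

lemma moveIn {β : Type*} [AddCommMonoid β] (s : Finset ℕ) (L M N : ℕ) (g : ℕ→ℕ→ℕ→ℕ→ℕ→ℕ→β) :
    (∑ x ∈ s, ∑ j ∈ range (M+1), ∑ j' ∈ range (N+1), ∑ l ∈ range (L+1),
      ∑ p ∈ range (L-l+1), ∑ i ∈ range (L-l-p+1), g x j j' l p i)
    = ∑ j ∈ range (M+1), ∑ j' ∈ range (N+1), ∑ l ∈ range (L+1), ∑ p ∈ range (L-l+1),
        ∑ i ∈ range (L-l-p+1), ∑ x ∈ s, g x j j' l p i := by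
  rw [Finset.sum_comm]
  refine Finset.sum_congr rfl fun j _ => ?_
  rw [Finset.sum_comm]
  refine Finset.sum_congr rfl fun j' _ => ?_
  rw [Finset.sum_comm]
  refine Finset.sum_congr rfl fun l _ => ?_
  rw [Finset.sum_comm]
  refine Finset.sum_congr rfl fun p _ => ?_
  rw [Finset.sum_comm]

lemma moveIn3 {β : Type*} [AddCommMonoid β] (s : Finset ℕ) (L : ℕ) (g : ℕ→ℕ→ℕ→ℕ→β) :
    (∑ x ∈ s, ∑ l ∈ range (L+1), ∑ p ∈ range (L-l+1), ∑ i ∈ range (L-l-p+1), g x l p i)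
    = ∑ l ∈ range (L+1), ∑ p ∈ range (L-l+1), ∑ i ∈ range (L-l-p+1), ∑ x ∈ s, g x l p i := by
  rw [Finset.sum_comm]
  refine Finset.sum_congr rfl fun l _ => ?_
  rw [Finset.sum_comm]
  refine Finset.sum_congr rfl fun p _ => ?_
  rw [Finset.sum_comm]

/-- Generalized bilinear formula, stated coefficient by coefficient in the
formal variables `x`, `y`, `z`: for all `L, M, N`, the coefficient of
`x^L y^M z^N` of `∑_{l,m,n} C_{l+m}(a,r) C_{l+n}(b,s) x^l y^m z^n/(l! m! n!)`,
namely `C_{L+M}(a,r) C_{L+N}(b,s)/(L! M! N!)`, equals that of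
`e^{rsx+ry+sz} ∑_l (a)_l (b)_l x^l/(l! (1-sx-y)^{l+a} (1-rx-z)^{l+b})`,
expanded via `e^w = ∑ w^p/p!` and `(1-w)^{-u} = ∑ (u)_d w^d/d!` (so the
coefficient of `x^i y^j` in `(1-sx-y)^{-u}` is `(u)_{i+j} s^i/(i! j!)`). -/
theorem stmt12 {R : Type*} [CommRing R] [Algebra ℚ R] (a b r s : R) :
    ∀ L M N : ℕ,
      ((L.factorial * M.factorial * N.factorial : ℕ) : ℚ)⁻¹ •
          (Ch a r (L + M) * Ch b s (L + N)) =
        ∑ l ∈ Finset.range (L + 1), ∑ p ∈ Finset.range (L - l + 1),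
          ∑ i ∈ Finset.range (L - l - p + 1),
            ∑ j ∈ Finset.range (M + 1), ∑ j' ∈ Finset.range (N + 1),
              ((l.factorial : ℚ)⁻¹ • (rf a l * rf b l)) *
                ((p.factorial : ℚ)⁻¹ • (r * s) ^ p) *
                (((M - j).factorial : ℚ)⁻¹ • r ^ (M - j)) *
                (((N - j').factorial : ℚ)⁻¹ • s ^ (N - j')) *
                (((i.factorial * j.factorial : ℕ) : ℚ)⁻¹ •
                  (rf (a + (l : R)) (i + j) * s ^ i)) *
                ((((L - l - p - i).factorial * j'.factorial : ℕ) : ℚ)⁻¹ •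
                  (rf (b + (l : R)) ((L - l - p - i) + j') * r ^ (L - l - p - i))) := by
  intro L M N
  have expand : ((L.factorial * M.factorial * N.factorial : ℕ) : ℚ)⁻¹ •
      (Ch a r (L + M) * Ch b s (L + N))
      = ∑ k ∈ range (L+M+1), ∑ k' ∈ range (L+N+1),
          ((((L+M).choose k * (L+N).choose k' : ℚ)) / (L.factorial * M.factorial * N.factorial)) •
            (rf a k * rf b k' * r^(L+M-k) * s^(L+N-k')) := by
    rw [Ch, Ch, Finset.sum_mul_sum, Finset.smul_sum]
    refine Finset.sum_congr rfl fun k _ => ?_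
    rw [Finset.smul_sum]
    refine Finset.sum_congr rfl fun k' _ => ?_
    have h1 : (((L+M).choose k : R) * rf a k * r ^ (L+M-k)) *
        (((L+N).choose k' : R) * rf b k' * s ^ (L+N-k'))
        = (((L+M).choose k * (L+N).choose k' : ℕ) : R) *
          (rf a k * rf b k' * r^(L+M-k) * s^(L+N-k')) := by
      push_cast; ring
    rw [h1, ← nsmul_eq_mul, ← Nat.cast_smul_eq_nsmul ℚ, smul_smul]
    congr 1
    push_cast
    ring
  rw [expand]
  have step2 : ∀ k ∈ range (L+M+1), ∀ k' ∈ range (L+N+1),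
      ((((L+M).choose k * (L+N).choose k' : ℚ)) / (L.factorial * M.factorial * N.factorial)) •
        (rf a k * rf b k' * r^(L+M-k) * s^(L+N-k'))
      = ∑ j ∈ range (M+1), ∑ j' ∈ range (N+1), ∑ l ∈ range (L+1), ∑ p ∈ range (L-l+1),
          ∑ i ∈ range (L-l-p+1),
          (if l+i+j = k ∧ (L-p-i)+j' = k' then
            ((((M-j).factorial * j.factorial : ℕ) : ℚ)⁻¹ * (((N-j').factorial * j'.factorial : ℕ) : ℚ)⁻¹ *
            ((l.factorial * p.factorial * i.factorial * (L-l-p-i).factorial : ℕ) : ℚ)⁻¹) •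
              (rf a k * rf b k' * r^(L+M-k) * s^(L+N-k')) else 0) := by
    intro k _ k' _
    rw [← lemC L M N k k']
    simp only [Finset.sum_smul, ite_smul, zero_smul]
  rw [Finset.sum_congr rfl (fun k hk => Finset.sum_congr rfl (fun k' hk' => step2 k hk k' hk'))]
  rw [Finset.sum_congr rfl (fun k _ => moveIn (range (L+N+1)) L M N _), moveIn (range (L+M+1)) L M N _]
  rw [Finset.sum_congr rfl (fun j _ => moveIn3 (range (N+1)) L _), moveIn3 (range (M+1)) L _]
  refine Finset.sum_congr rfl fun l hl => Finset.sum_congr rfl fun p hp =>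
    Finset.sum_congr rfl fun i hi => Finset.sum_congr rfl fun j hj =>
    Finset.sum_congr rfl fun j' hj' => ?_
  have hl' : l ≤ L := Nat.lt_succ_iff.1 (Finset.mem_range.1 hl)
  have hp' : p ≤ L - l := Nat.lt_succ_iff.1 (Finset.mem_range.1 hp)
  have hi' : i ≤ L - l - p := Nat.lt_succ_iff.1 (Finset.mem_range.1 hi)
  have hj0 : j ≤ M := Nat.lt_succ_iff.1 (Finset.mem_range.1 hj)
  have hj0' : j' ≤ N := Nat.lt_succ_iff.1 (Finset.mem_range.1 hj')
  -- collapse the k, k' sums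
  have c1 : ∀ k ∈ range (L+M+1),
      (∑ k' ∈ range (L+N+1), if l+i+j = k ∧ (L-p-i)+j' = k' then
        ((((M-j).factorial * j.factorial : ℕ) : ℚ)⁻¹ * (((N-j').factorial * j'.factorial : ℕ) : ℚ)⁻¹ *
        ((l.factorial * p.factorial * i.factorial * (L-l-p-i).factorial : ℕ) : ℚ)⁻¹) •
          (rf a k * rf b k' * r^(L+M-k) * s^(L+N-k')) else 0)
      = if k = l+i+j then
          ((((M-j).factorial * j.factorial : ℕ) : ℚ)⁻¹ * (((N-j').factorial * j'.factorial : ℕ) : ℚ)⁻¹ *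
          ((l.factorial * p.factorial * i.factorial * (L-l-p-i).factorial : ℕ) : ℚ)⁻¹) •
            (rf a k * rf b ((L-p-i)+j') * r^(L+M-k) * s^(L+N-((L-p-i)+j'))) else 0 := by
    intro k _
    rw [Finset.sum_congr rfl (fun k' _ => if_congr (show (l+i+j = k ∧ (L-p-i)+j' = k') ↔
        (k' = (L-p-i)+j' ∧ l+i+j = k) by omega) rfl rfl),
      sum_ite_eqP (L+N+1) ((L-p-i)+j') (fun _ => l+i+j = k)]
    exact if_congr (by omega) rfl rfl
  rw [Finset.sum_congr rfl c1,
    Finset.sum_ite_eq' (range (L+M+1)) (l+i+j),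
    if_pos (Finset.mem_range.2 (by omega))]
  -- final per-term identity
  rw [show (L-p-i)+j' = l + ((L-l-p-i)+j') from by omega,
    show l+i+j = l+(i+j) from by omega,
    ← rf_add a l (i+j), ← rf_add b l ((L-l-p-i)+j'),
    show L+M-(l+(i+j)) = p+(M-j)+(L-l-p-i) from by omega,
    show L+N-(l+((L-l-p-i)+j')) = p+(N-j')+i from by omega]
  simp only [smul_mul_smul_comm]
  congr 1
  · push_cast
    simp only [mul_inv]
    ring
  · ring
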